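/- Let A be a finite-dimensional algebra over a field and f an idempotent of A admitting a short exact sequence of left A-modules 0 → A(1−e) → P → A/⟨f⟩ → 0 with P ∈ add(Ae) for some idempotent e, and suppose Ext^1_A(A/⟨f⟩, Ae) = 0 and Ext^1_A(A/⟨f⟩, A/⟨f⟩) = 0. Then the A-module T = Ae ⊕ A/⟨f⟩ is a tilting module: projdim_A(T) ≤ 1, Ext^1_A(T,T) = 0, and there is a short exact sequence 0 → A → T_0 → T_1 → 0 with T_0, T_1 ∈ add(T). -/

import Mathlib

open CategoryTheory

noncomputable section

/-- Vanishing of the `n`-th Ext group of two `A`-modules. -/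
def ExtVanish (A : Type) [Ring A] (n : ℕ) (X Y : ModuleCat.{0} A) : Prop :=
  Limits.IsZero (((Ext ℤ (ModuleCat.{0} A) n).obj (Opposite.op X)).obj Y)

/-- `M` belongs to `add X`: it is a direct summand of a finite direct sum of copies of `X`. -/
def InAdd (A : Type) [Ring A] (X M : ModuleCat.{0} A) : Prop :=
  ∃ (n : ℕ) (i : M →ₗ[A] (Fin n → X)) (p : (Fin n → X) →ₗ[A] M),
    p.comp i = LinearMap.id

/-- `N` is a (first) syzygy of `M`: there is an exact sequence `0 → N → P → M → 0`
with `P` projective. -/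
def IsSyzygyOf (A : Type) [Ring A] (N M : ModuleCat.{0} A) : Prop :=
  ∃ (P : ModuleCat.{0} A), Module.Projective A P ∧
    ∃ (ι : N →ₗ[A] P) (π : P →ₗ[A] M),
      Function.Injective ι ∧ Function.Surjective π ∧ Function.Exact ι π

/-- `N` is an `n`-th syzygy of `M`. -/
def IsNthSyzygyOf (A : Type) [Ring A] : ℕ → ModuleCat.{0} A → ModuleCat.{0} A → Prop
  | 0, N, M => Nonempty (N ≅ M)
  | n + 1, N, M => ∃ K : ModuleCat.{0} A, IsSyzygyOf A K M ∧ IsNthSyzygyOf A n N K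

/-- `N` is a (first) cosyzygy of `M`: there is an exact sequence `0 → M → I → N → 0`
with `I` injective. -/
def IsCosyzygyOf (A : Type) [Ring A] (N M : ModuleCat.{0} A) : Prop :=
  ∃ (I : ModuleCat.{0} A), Module.Injective A I ∧
    ∃ (ι : M →ₗ[A] I) (π : I →ₗ[A] N),
      Function.Injective ι ∧ Function.Surjective π ∧ Function.Exact ι π

/-- `N` is an `n`-th cosyzygy of `M`. -/
def IsNthCosyzygyOf (A : Type) [Ring A] : ℕ → ModuleCat.{0} A → ModuleCat.{0} A → Prop
  | 0, N, M => Nonempty (N ≅ M)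
  | n + 1, N, M => ∃ K : ModuleCat.{0} A, IsCosyzygyOf A K M ∧ IsNthCosyzygyOf A n N K

/-- The projective dimension of `M` is at most `n`. -/
def ProjDimLE (A : Type) [Ring A] (n : ℕ) (M : ModuleCat.{0} A) : Prop :=
  ∃ K : ModuleCat.{0} A, IsNthSyzygyOf A n K M ∧ Module.Projective A K

/-- The injective dimension of `M` is at most `n`. -/
def InjDimLE (A : Type) [Ring A] (n : ℕ) (M : ModuleCat.{0} A) : Prop :=
  ∃ K : ModuleCat.{0} A, IsNthCosyzygyOf A n K M ∧ Module.Injective A K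

/-- The underlying type of `D(A) = Hom_k(A, k)`. -/
def DualMod (k A : Type) [Field k] [Ring A] [Algebra k A] : Type := A →ₗ[k] k

instance (k A : Type) [Field k] [Ring A] [Algebra k A] : AddCommGroup (DualMod k A) :=
  inferInstanceAs (AddCommGroup (A →ₗ[k] k))

/-- Auxiliary scalar action for `DualMod`. -/
def dualSMul (k A : Type) [Field k] [Ring A] [Algebra k A] (a : A) (φ : A →ₗ[k] k) :
    A →ₗ[k] k := φ.comp (LinearMap.mulRight k a)

/-- The left `A`-module structure on `D(A)`: `(a • φ) x = φ (x * a)`. -/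
instance (k A : Type) [Field k] [Ring A] [Algebra k A] : Module A (DualMod k A) where
  smul a φ := dualSMul k A a φ
  one_smul φ := by
    show dualSMul k A 1 φ = φ
    unfold dualSMul; ext x
    change @DFunLike.coe (A →ₗ[k] k) A (fun _ => k) _ φ (x * 1) = @DFunLike.coe (A →ₗ[k] k) A (fun _ => k) _ φ x
    rw [mul_one]
  mul_smul a b φ := by
    show dualSMul k A (a * b) φ = dualSMul k A a (dualSMul k A b φ)
    unfold dualSMul; ext x
    change @DFunLike.coe (A →ₗ[k] k) A (fun _ => k) _ φ (x * (a * b)) = @DFunLike.coe (A →ₗ[k] k) A (fun _ => k) _ φ (x * a * b)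
    rw [mul_assoc]
  smul_zero a := by
    show dualSMul k A a 0 = 0
    unfold dualSMul; ext x; simp
  smul_add a φ ψ := by
    show dualSMul k A a (φ + ψ) = dualSMul k A a φ + dualSMul k A a ψ
    unfold dualSMul; ext x; rfl
  add_smul a b φ := by
    show dualSMul k A (a + b) φ = dualSMul k A a φ + dualSMul k A b φ
    unfold dualSMul; ext x
    change @DFunLike.coe (A →ₗ[k] k) A (fun _ => k) _ φ (x * (a + b)) = @DFunLike.coe (A →ₗ[k] k) A (fun _ => k) _ φ (x * a) + @DFunLike.coe (A →ₗ[k] k) A (fun _ => k) _ φ (x * b)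
    rw [mul_add]
    exact LinearMap.map_add _ _ _
  zero_smul φ := by
    show dualSMul k A 0 φ = 0
    unfold dualSMul; ext x
    change @DFunLike.coe (A →ₗ[k] k) A (fun _ => k) _ φ (x * 0) = 0
    rw [mul_zero]
    exact LinearMap.map_zero _

/-- `D(A)`, the dual of the right regular module, as an object of `ModuleCat A`. -/
def DualA (k A : Type) [Field k] [Ring A] [Algebra k A] : ModuleCat.{0} A :=
  ModuleCat.of A (DualMod k A)

/-- The idempotent ideal `⟨e⟩ = AeA`, as a left submodule of `A`. -/
def idemIdeal (A : Type) [Ring A] (e : A) : Submodule A A :=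
  Submodule.span A (Set.range fun b : A => e * b)

/-- The quotient `A/⟨e⟩` as a left `A`-module. -/
def quotMod (A : Type) [Ring A] (e : A) : ModuleCat.{0} A :=
  ModuleCat.of A (A ⧸ idemIdeal A e)

/-- The left ideal `Ae = {x | x * e = x}` (for `e` idempotent), as a submodule of `A`. -/
def leftPart (A : Type) [Ring A] (e : A) : Submodule A A where
  carrier := {x | x * e = x}
  add_mem' := by intro a b ha hb; simp only [Set.mem_setOf_eq] at *; rw [add_mul, ha, hb]
  zero_mem' := by simp
  smul_mem' := by intro c x hx; simp only [Set.mem_setOf_eq, smul_eq_mul] at *;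
                  rw [mul_assoc, hx]

/-- `Ae` as an object of `ModuleCat A`. -/
def AeMod (A : Type) [Ring A] (e : A) : ModuleCat.{0} A :=
  ModuleCat.of A (leftPart A e)

/-- `M` is Gorenstein projective: `Ext^i_A(M, A) = 0` for all `i > 0`. -/
def IsGorensteinProjective (A : Type) [Ring A] (M : ModuleCat.{0} A) : Prop :=
  ∀ i : ℕ, 0 < i → ExtVanish A i M (ModuleCat.of A A)

/-- `M` is Gorenstein injective: `Ext^i_A(D(A), M) = 0` for all `i > 0`. -/
def IsGorensteinInjective (k A : Type) [Field k] [Ring A] [Algebra k A]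
    (M : ModuleCat.{0} A) : Prop :=
  ∀ i : ℕ, 0 < i → ExtVanish A i (DualA k A) M

/-- `M ∈ gen_l(Ae)`: `M` has a projective resolution whose terms in degrees `≤ l`
lie in `add (Ae)`. -/
def GenLE (A : Type) [Ring A] (e : A) (l : ℕ) (M : ModuleCat.{0} A) : Prop :=
  ∃ (P : ℕ → ModuleCat.{0} A) (d : ∀ n : ℕ, (P (n + 1) →ₗ[A] P n)) (π : P 0 →ₗ[A] M),
    (∀ n, Module.Projective A (P n)) ∧
    Function.Surjective π ∧
    Function.Exact (d 0) π ∧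
    (∀ n, Function.Exact (d (n + 1)) (d n)) ∧
    (∀ n ≤ l, InAdd A (AeMod A e) (P n))

/-- The left ideal `A(1-e) = {x | x * e = 0}`, as a submodule of `A`. -/
def leftPartC (A : Type) [Ring A] (e : A) : Submodule A A where
  carrier := {x | x * e = 0}
  add_mem' := by
    intro a b ha hb
    simp only [Set.mem_setOf_eq] at *
    rw [add_mul, ha, hb, add_zero]
  zero_mem' := by simp
  smul_mem' := by
    intro c x hx
    simp only [Set.mem_setOf_eq, smul_eq_mul] at *
    rw [mul_assoc, hx, mul_zero]

open Limits
section Aux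
variable {A : Type} [Ring A]

section Retr
variable (e : A) (he : IsIdempotentElem e)
include he

def rAe : A →ₗ[A] leftPart A e :=
  LinearMap.codRestrict (leftPart A e) (LinearMap.toSpanSingleton A A e)
    (fun a => show a * e * e = a * e by rw [mul_assoc, he])

def rC : A →ₗ[A] leftPartC A e :=
  LinearMap.codRestrict (leftPartC A e)
    (LinearMap.id - LinearMap.toSpanSingleton A A e)
    (fun a => show (a - a * e) * e = 0 by rw [sub_mul, mul_assoc, he, sub_self])

@[simp] lemma rAe_apply (a : A) : ((rAe e he a : A)) = a * e := rfl

@[simp] lemma rC_apply (a : A) : ((rC e he a : A)) = a - a * e := rfl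

lemma projAe : Module.Projective A (leftPart A e) :=
  Module.Projective.of_split (leftPart A e).subtype (rAe e he)
    (by
      ext x
      show (x : A) * e = (x : A)
      exact x.2)

lemma projC : Module.Projective A (leftPartC A e) :=
  Module.Projective.of_split (leftPartC A e).subtype (rC e he)
    (by
      ext x
      show (x : A) - (x : A) * e = (x : A)
      rw [show ((x : A)) * e = 0 from x.2, sub_zero])

end Retr

lemma projective_pi_fin {X : Type} [AddCommGroup X] [Module A X]
    (hX : Module.Projective A X) (n : ℕ) : Module.Projective A (Fin n → X) := by
  letI := hX
  exact Module.Projective.of_equiv (R := A) (M := Π₀ _ : Fin n, X)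
    ({ DFinsupp.equivFunOnFintype with
      map_add' := fun a b => rfl
      map_smul' := fun c x => rfl } : (Π₀ _ : Fin n, X) ≃ₗ[A] (Fin n → X))

lemma projective_of_inAdd {X M : ModuleCat.{0} A} (hX : Module.Projective A X)
    (h : InAdd A X M) : Module.Projective A M := by
  obtain ⟨n, i, p, hpi⟩ := h
  letI := projective_pi_fin hX n
  exact Module.Projective.of_split i p hpi

def twoTermX (K Q : ModuleCat.{0} A) : ℕ → ModuleCat.{0} A
  | 0 => Q
  | 1 => K
  | _ + 2 => ModuleCat.of A PUnit

def twoTermD (K Q : ModuleCat.{0} A) (i : K ⟶ Q) :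
    ∀ n : ℕ, twoTermX K Q (n + 1) ⟶ twoTermX K Q n
  | 0 => i
  | _ + 1 => 0

def twoTermCx (K Q : ModuleCat.{0} A) (i : K ⟶ Q) : ChainComplex (ModuleCat.{0} A) ℕ :=
  ChainComplex.of (twoTermX K Q) (twoTermD K Q i)
    (fun n => match n with
      | 0 => by simp [twoTermD]; exact Limits.zero_comp
      | _ + 1 => by simp [twoTermD])

instance : Subsingleton (ModuleCat.of A PUnit) := by
  show Subsingleton PUnit; infer_instance

lemma twoTermCx_d10 (K Q : ModuleCat.{0} A) (i : K ⟶ Q) :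
    (twoTermCx K Q i).d 1 0 = i :=
  ChainComplex.of_d (twoTermX K Q) (twoTermD K Q i) 0

lemma twoTermCx_d21 (K Q : ModuleCat.{0} A) (i : K ⟶ Q) :
    (twoTermCx K Q i).d 2 1 = 0 :=
  ChainComplex.of_d (twoTermX K Q) (twoTermD K Q i) 1

def twoTermRes (K Q M : ModuleCat.{0} A) (i : K ⟶ Q) (p : Q ⟶ M)
    [hK : Projective K] [hQ : Projective Q] [hi : Mono i] [hp : Epi p]
    (w : i ≫ p = 0)
    (hex : (ShortComplex.mk i p w).Exact) : ProjectiveResolution M where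
  complex := twoTermCx K Q i
  projective n := by
    match n with
    | 0 => exact hQ
    | 1 => exact hK
    | n + 2 =>
      show Projective (ModuleCat.of A PUnit)
      rw [← IsProjective.iff_projective]
      infer_instance
  π := (ChainComplex.toSingle₀Equiv _ _).symm ⟨p, by
    show (twoTermCx K Q i).d 1 0 ≫ p = 0
    rw [twoTermCx_d10]; exact w⟩
  quasiIso := ⟨fun n => by
    cases n with
    | zero =>
      rw [ChainComplex.quasiIsoAt₀_iff, ShortComplex.quasiIso_iff_of_zeros']
      · refine (ShortComplex.exact_and_epi_g_iff_of_iso ?_).2 ⟨hex, hp⟩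
        refine ShortComplex.isoMk (Iso.refl _) (Iso.refl _) (Iso.refl _) ?_ ?_
        · simp only [Iso.refl_hom, Category.id_comp, Category.comp_id]
          exact (twoTermCx_d10 K Q i).symm
        · simp [ChainComplex.toSingle₀Equiv]; rfl
      all_goals rfl
    | succ n =>
      rw [quasiIsoAt_iff_exactAt' _ _ (ChainComplex.exactAt_succ_single_obj _ _)]
      rw [HomologicalComplex.exactAt_iff' _ (n + 2) (n + 1) n (by simp) (by simp)]
      cases n with
      | zero =>
        rw [ShortComplex.exact_iff_mono]
        · exact hi
        · exact twoTermCx_d21 K Q i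
      | succ m =>
        apply ShortComplex.exact_of_isZero_X₂
        exact ModuleCat.isZero_of_subsingleton (ModuleCat.of A PUnit)⟩


instance (Y : ModuleCat.{0} A) : Subsingleton (ModuleCat.of A PUnit ⟶ Y) := by
  constructor
  intro f g
  ext x
  rw [Subsingleton.elim x (0 : PUnit.{1})]
  change f 0 = g 0
  rw [map_zero, map_zero]

lemma extVanish_one_iff (K Q M Y : ModuleCat.{0} A) (i : K ⟶ Q) (p : Q ⟶ M)
    [Projective K] [Projective Q] [Mono i] [Epi p] (w : i ≫ p = 0)
    (hex : (ShortComplex.mk i p w).Exact) :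
    ExtVanish A 1 M Y ↔ ∀ φ : K ⟶ Y, ∃ Φ : Q ⟶ Y, i ≫ Φ = φ := by
  let R := twoTermRes K Q M i p w hex
  have e := R.isoExt (R := ℤ) 1 Y
  have h1 : ExtVanish A 1 M Y ↔ IsZero ((R.complex.linearYonedaObj ℤ Y).homology 1) :=
    ⟨fun h => h.of_iso e.symm, fun h => h.of_iso e⟩
  rw [h1, ← HomologicalComplex.exactAt_iff_isZero_homology,
    HomologicalComplex.exactAt_iff' _ 0 1 2 (by simp) (by simp)]
  have hg : (HomologicalComplex.sc' (R.complex.linearYonedaObj ℤ Y) 0 1 2).g = 0 := by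
    have : IsZero ((R.complex.linearYonedaObj ℤ Y).X 2) := by
      exact @ModuleCat.isZero_of_subsingleton ℤ _ _
        ⟨fun a b => Subsingleton.elim (α := ModuleCat.of A PUnit ⟶ Y) a b⟩
    exact this.eq_of_tgt _ _
  rw [ShortComplex.exact_iff_epi _ hg, ModuleCat.epi_iff_surjective]
  have hf : ∀ Φ : Q ⟶ Y, (HomologicalComplex.sc' (R.complex.linearYonedaObj ℤ Y) 0 1 2).f Φ
      = i ≫ Φ := by
    intro Φ
    show (R.complex.linearYonedaObj ℤ Y).d 0 1 Φ = i ≫ Φ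
    rw [ChainComplex.linearYonedaObj_d]
    show R.complex.d 1 0 ≫ Φ = i ≫ Φ
    have hd : R.complex.d 1 0 = i := twoTermCx_d10 K Q i
    rw [hd]
    rfl
  constructor
  · intro h φ
    obtain ⟨Φ, hΦ⟩ := h φ
    exact ⟨Φ, by rw [← hf Φ, hΦ]⟩
  · intro h φ
    obtain ⟨Φ, hΦ⟩ := h φ
    exact ⟨Φ, by rw [hf Φ, hΦ]⟩


lemma extVanish_crit (K Q M Y : ModuleCat.{0} A)
    (hK : Module.Projective A K) (hQ : Module.Projective A Q)
    (i : K →ₗ[A] Q) (p : Q →ₗ[A] M)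
    (hi : Function.Injective i) (hp : Function.Surjective p)
    (hex : Function.Exact i p) :
    ExtVanish A 1 M Y ↔ ∀ φ : K →ₗ[A] Y, ∃ Φ : Q →ₗ[A] Y, Φ.comp i = φ := by
  haveI : Projective K := (IsProjective.iff_projective K).mp hK
  haveI : Projective Q := (IsProjective.iff_projective Q).mp hQ
  haveI : Mono (ModuleCat.ofHom i) := (ModuleCat.mono_iff_injective _).mpr hi
  haveI : Epi (ModuleCat.ofHom p) := (ModuleCat.epi_iff_surjective _).mpr hp
  have w : ModuleCat.ofHom i ≫ ModuleCat.ofHom p = 0 := by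
    ext x
    exact hex.apply_apply_eq_zero x
  have hexS : (ShortComplex.mk (ModuleCat.ofHom i) (ModuleCat.ofHom p) w).Exact := by
    rw [ShortComplex.moduleCat_exact_iff]
    intro x hx
    exact (hex x).mp hx
  rw [extVanish_one_iff K Q M Y (ModuleCat.ofHom i) (ModuleCat.ofHom p) w hexS]
  constructor
  · intro h φ
    obtain ⟨Φ, hΦ⟩ := h (ModuleCat.ofHom φ)
    exact ⟨Φ.hom, congrArg ModuleCat.Hom.hom hΦ⟩
  · intro h φ
    obtain ⟨Φ, hΦ⟩ := h φ.hom
    exact ⟨ModuleCat.ofHom Φ, by ext x; exact LinearMap.congr_fun hΦ x⟩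

end Aux

/-- Under the stated hypotheses, `T = Ae ⊕ A/⟨f⟩` is a tilting module. -/
theorem stmt_10 (k A : Type) [Field k] [Ring A] [Algebra k A] [FiniteDimensional k A]
    (e f : A) (he : IsIdempotentElem e) (hf : IsIdempotentElem f)
    (P : ModuleCat.{0} A) (hP : InAdd A (AeMod A e) P)
    (ι : (leftPartC A e) →ₗ[A] P) (π : P →ₗ[A] (A ⧸ idemIdeal A f))
    (hι : Function.Injective ι) (hπ : Function.Surjective π)
    (hexact : Function.Exact ι π)
    (hext1 : ExtVanish A 1 (quotMod A f) (quotMod A f))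
    (hext2 : ExtVanish A 1 (quotMod A f) (AeMod A e)) :
    ProjDimLE A 1 (ModuleCat.of A ((leftPart A e) × (A ⧸ idemIdeal A f))) ∧
    ExtVanish A 1 (ModuleCat.of A ((leftPart A e) × (A ⧸ idemIdeal A f)))
      (ModuleCat.of A ((leftPart A e) × (A ⧸ idemIdeal A f))) ∧
    ∃ (T0 T1 : ModuleCat.{0} A)
      (α : A →ₗ[A] T0) (β : T0 →ₗ[A] T1),
      InAdd A (ModuleCat.of A ((leftPart A e) × (A ⧸ idemIdeal A f))) T0 ∧
      InAdd A (ModuleCat.of A ((leftPart A e) × (A ⧸ idemIdeal A f))) T1 ∧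
      Function.Injective α ∧ Function.Surjective β ∧ Function.Exact α β := by

  classical
  -- basic projectivity facts
  have hprojAe : Module.Projective A (leftPart A e) := projAe e he
  have hprojC : Module.Projective A (leftPartC A e) := projC e he
  have hprojP : Module.Projective A P := projective_of_inAdd hprojAe hP
  have hprojQ : Module.Projective A ((leftPart A e) × P) := by
    letI := hprojAe; letI := hprojP; infer_instance
  -- the modules
  set T : ModuleCat.{0} A := ModuleCat.of A ((leftPart A e) × (A ⧸ idemIdeal A f)) with hT
  set KM : ModuleCat.{0} A := ModuleCat.of A (leftPartC A e) with hKM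
  set QM : ModuleCat.{0} A := ModuleCat.of A ((leftPart A e) × P) with hQM
  -- the syzygy maps
  set ι₁ : KM →ₗ[A] QM := LinearMap.prod 0 ι with hι₁def
  set π₁ : QM →ₗ[A] T :=
    LinearMap.prodMap (LinearMap.id : leftPart A e →ₗ[A] leftPart A e) π with hπ₁def
  have hι₁ : Function.Injective ι₁ := by
    intro x y h
    exact hι (congrArg Prod.snd h)
  have hπ₁ : Function.Surjective π₁ := by
    rintro ⟨a, q⟩
    obtain ⟨p, hp⟩ := hπ q
    exact ⟨(a, p), by show (a, π p) = (a, q); rw [hp]⟩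
  have hexact₁ : Function.Exact ι₁ π₁ := by
    rintro ⟨a, p⟩
    constructor
    · intro h
      have h1 : a = 0 := congrArg Prod.fst h
      have h2 : π p = 0 := congrArg Prod.snd h
      obtain ⟨x, hx⟩ := (hexact p).mp h2
      exact ⟨x, by show ((0 : leftPart A e), ι x) = (a, p); rw [hx, h1]⟩
    · rintro ⟨x, h⟩
      rw [← h]
      have h0 : π (ι x) = 0 := hexact.apply_apply_eq_zero x
      show ((0 : leftPart A e), π (ι x)) = 0
      rw [h0]
      rfl
  refine ⟨?_, ?_, ?_⟩
  · -- projective dimension at most one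
    exact ⟨KM, ⟨KM, ⟨QM, hprojQ, ι₁, π₁, hι₁, hπ₁, hexact₁⟩, ⟨Iso.refl _⟩⟩, hprojC⟩
  · -- Ext vanishing
    rw [extVanish_crit KM QM T T hprojC hprojQ ι₁ π₁ hι₁ hπ₁ hexact₁]
    intro φ
    have E1 := (extVanish_crit KM P (quotMod A f) (quotMod A f) hprojC hprojP
      ι π hι hπ hexact).mp hext1
    have E2 := (extVanish_crit KM P (quotMod A f) (AeMod A e) hprojC hprojP
      ι π hι hπ hexact).mp hext2
    obtain ⟨Φ₁, hΦ₁⟩ := E2 ((LinearMap.fst A (leftPart A e) (A ⧸ idemIdeal A f)).comp φ)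
    obtain ⟨Φ₂, hΦ₂⟩ := E1 ((LinearMap.snd A (leftPart A e) (A ⧸ idemIdeal A f)).comp φ)
    refine ⟨(LinearMap.prod Φ₁ Φ₂).comp (LinearMap.snd A (leftPart A e) P), ?_⟩
    apply LinearMap.ext
    intro x
    exact Prod.ext (LinearMap.congr_fun hΦ₁ x) (LinearMap.congr_fun hΦ₂ x)
  · -- the coresolution of A
    obtain ⟨n, iP, pP, hc⟩ := hP
    refine ⟨QM, quotMod A f,
      LinearMap.prod (rAe e he) (ι.comp (rC e he)),
      π.comp (LinearMap.snd A (leftPart A e) P), ?_, ?_, ?_, ?_, ?_⟩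
    · -- InAdd T QM
      refine ⟨n + 1,
        LinearMap.pi (fun j : Fin (n + 1) =>
          Fin.cases
            ((LinearMap.inl A (leftPart A e) (A ⧸ idemIdeal A f)).comp
              (LinearMap.fst A (leftPart A e) P))
            (fun j : Fin n =>
              (LinearMap.inl A (leftPart A e) (A ⧸ idemIdeal A f)).comp
                ((LinearMap.proj j).comp (iP.comp (LinearMap.snd A (leftPart A e) P)))) j),
        LinearMap.prod
          ((LinearMap.fst A (leftPart A e) (A ⧸ idemIdeal A f)).comp
            (LinearMap.proj (0 : Fin (n + 1))))
          (pP.comp (LinearMap.pi (fun j : Fin n =>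
            (LinearMap.fst A (leftPart A e) (A ⧸ idemIdeal A f)).comp
              (LinearMap.proj j.succ)))), ?_⟩
      apply LinearMap.ext
      intro x
      refine Prod.ext ?_ ?_
      · rfl
      · show pP (fun j : Fin n => iP x.2 j) = x.2
        exact LinearMap.congr_fun hc x.2
    · -- InAdd T (quotMod A f)
      refine ⟨1, LinearMap.pi (fun _ : Fin 1 =>
          LinearMap.inr A (leftPart A e) (A ⧸ idemIdeal A f)),
        (LinearMap.snd A (leftPart A e) (A ⧸ idemIdeal A f)).comp
          (LinearMap.proj (0 : Fin 1)), ?_⟩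
      apply LinearMap.ext
      intro x
      rfl
    · -- injectivity of α
      intro a b h
      have h1 : a * e = b * e := congrArg (fun z => ((Prod.fst z : leftPart A e) : A)) h
      have h2 : ι (rC e he a) = ι (rC e he b) := congrArg Prod.snd h
      have h3 := hι h2
      have h4 : a - a * e = b - b * e := congrArg Subtype.val h3
      have := congrArg₂ (· + ·) h4 h1
      simpa [sub_add_cancel] using this
    · -- surjectivity of β
      intro q
      obtain ⟨p, hp⟩ := hπ q
      exact ⟨(0, p), hp⟩
    · -- exactness
      rintro ⟨x, p⟩
      constructor
      · intro h
        have h2 : π p = 0 := h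
        obtain ⟨y, hy⟩ := (hexact p).mp h2
        refine ⟨(x : A) + (y : A), ?_⟩
        have hx2 : (x : A) * e = (x : A) := x.2
        have hy2 : (y : A) * e = 0 := y.2
        have e1 : rAe e he ((x : A) + (y : A)) = x := by
          apply Subtype.ext
          show ((x : A) + (y : A)) * e = (x : A)
          rw [add_mul, hx2, hy2, add_zero]
        have e2 : rC e he ((x : A) + (y : A)) = y := by
          apply Subtype.ext
          show ((x : A) + (y : A)) - ((x : A) + (y : A)) * e = (y : A)
          rw [add_mul, hx2, hy2, add_zero, add_sub_cancel_left]
        show (rAe e he _, ι (rC e he _)) = (x, p)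
        rw [e1, e2, hy]
      · rintro ⟨a, h⟩
        rw [← h]
        show π (ι (rC e he a)) = 0
        exact hexact.apply_apply_eq_zero _

end
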